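/- Suppose (L_i)_{1 ≤ i ≤ n} are nonnegative reals with L_n = K_g and L_{i-1} ≤ max(L_i e^{K_1 Δt_i} + K_2 Δt_i, L_n) for i = 2,...,n, where K_1, K_2 ≥ 0 and Δt_i > 0 with Σ_{i=1}^n Δt_i = T. Then max_{1 ≤ i ≤ n} L_i ≤ e^{K_1 T}(K_g + K_2 T). -/

import Mathlib

/-- Uniform bound on the Lipschitz constants L_i: if L_n = K_g and
L_{i-1} ≤ max(L_i e^{K₁Δt_i} + K₂Δt_i, L_n), then max_i L_i ≤ e^{K₁T}(K_g + K₂T). -/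
theorem lipschitz_constants_uniform_bound
    (n : ℕ) (hn : 1 ≤ n) (T K₁ K₂ Kg : ℝ) (hK₁ : 0 ≤ K₁) (hK₂ : 0 ≤ K₂)
    (Δt : ℕ → ℝ) (hΔt : ∀ i, 1 ≤ i → i ≤ n → 0 < Δt i)
    (hsum : ∑ i ∈ Finset.Icc 1 n, Δt i = T)
    (L : ℕ → ℝ) (hLnonneg : ∀ i, 1 ≤ i → i ≤ n → 0 ≤ L i)
    (hLn : L n = Kg)
    (hrec : ∀ i, 2 ≤ i → i ≤ n →
      L (i - 1) ≤ max (L i * Real.exp (K₁ * Δt i) + K₂ * Δt i) (L n)) :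
    ∀ i, 1 ≤ i → i ≤ n → L i ≤ Real.exp (K₁ * T) * (Kg + K₂ * T) := by
  have hKg : 0 ≤ Kg := hLn ▸ hLnonneg n hn le_rfl
  set R : ℕ → ℝ := fun i => ∑ j ∈ Finset.Icc (i+1) n, Δt j with hR
  have hRnonneg : ∀ i, 0 ≤ R i := by
    intro i
    apply Finset.sum_nonneg
    intro j hj
    simp only [Finset.mem_Icc] at hj
    exact (hΔt j (by omega) hj.2).le
  have hRT : ∀ i, 1 ≤ i → R i ≤ T := by
    intro i hi
    rw [← hsum]
    apply Finset.sum_le_sum_of_subset_of_nonneg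
    · intro j hj
      simp only [Finset.mem_Icc] at *
      omega
    · intro j hj _
      simp only [Finset.mem_Icc] at hj
      exact (hΔt j hj.1 hj.2).le
  have hT : 0 ≤ T := le_trans (hRnonneg n) (hRT n hn)
  have key : ∀ k i, i + k = n → 1 ≤ i →
      L i ≤ Real.exp (K₁ * R i) * (Kg + K₂ * R i) := by
    intro k
    induction k with
    | zero =>
      intro i hik hi
      have hin : i = n := by omega
      subst hin
      have hR0 : R i = 0 := by
        simp [hR, Finset.Icc_eq_empty_of_lt (by omega : i < i + 1)]
      rw [hR0, hLn]
      simp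
    | succ k ih =>
      intro i hik hi
      have hin : i + 1 ≤ n := by omega
      have h1 := hrec (i+1) (by omega) hin
      simp only [Nat.add_sub_cancel] at h1
      have h2 := ih (i+1) (by omega) (by omega)
      have hRR : R i = Δt (i+1) + R (i+1) := by
        have hset : Finset.Icc (i+1) n = insert (i+1) (Finset.Icc (i+2) n) := by
          ext j
          simp only [Finset.mem_Icc, Finset.mem_insert]
          omega
        simp only [hR]
        rw [hset, Finset.sum_insert (by simp only [Finset.mem_Icc]; omega)]
      have hΔpos := hΔt (i+1) (by omega) hin
      have hexpR : (1:ℝ) ≤ Real.exp (K₁ * R i) :=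
        Real.one_le_exp (mul_nonneg hK₁ (hRnonneg i))
      have hb1 : L (i+1) * Real.exp (K₁ * Δt (i+1)) + K₂ * Δt (i+1)
          ≤ Real.exp (K₁ * R i) * (Kg + K₂ * R i) := by
        have e1 : L (i+1) * Real.exp (K₁ * Δt (i+1))
            ≤ (Real.exp (K₁ * R (i+1)) * (Kg + K₂ * R (i+1))) * Real.exp (K₁ * Δt (i+1)) :=
          mul_le_mul_of_nonneg_right h2 (Real.exp_pos _).le
        have e2 : K₂ * Δt (i+1) ≤ Real.exp (K₁ * R i) * (K₂ * Δt (i+1)) :=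
          le_mul_of_one_le_left (mul_nonneg hK₂ hΔpos.le) hexpR
        have e3 : (Real.exp (K₁ * R (i+1)) * (Kg + K₂ * R (i+1))) * Real.exp (K₁ * Δt (i+1))
            = Real.exp (K₁ * R i) * (Kg + K₂ * R (i+1)) := by
          rw [hRR, mul_add K₁, Real.exp_add]
          ring
        calc L (i+1) * Real.exp (K₁ * Δt (i+1)) + K₂ * Δt (i+1)
            ≤ Real.exp (K₁ * R i) * (Kg + K₂ * R (i+1))
              + Real.exp (K₁ * R i) * (K₂ * Δt (i+1)) := by
              rw [← e3]; exact add_le_add e1 e2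
          _ = Real.exp (K₁ * R i) * (Kg + K₂ * R i) := by rw [hRR]; ring
      have hb2 : L n ≤ Real.exp (K₁ * R i) * (Kg + K₂ * R i) := by
        rw [hLn]
        calc Kg ≤ Kg + K₂ * R i := le_add_of_nonneg_right (mul_nonneg hK₂ (hRnonneg i))
          _ ≤ Real.exp (K₁ * R i) * (Kg + K₂ * R i) :=
            le_mul_of_one_le_left (add_nonneg hKg (mul_nonneg hK₂ (hRnonneg i))) hexpR
      exact h1.trans (max_le hb1 hb2)
  intro i hi1 hin
  have h := key (n - i) i (by omega) hi1
  refine h.trans (mul_le_mul ?_ ?_ ?_ (Real.exp_pos _).le)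
  · exact Real.exp_le_exp.mpr (mul_le_mul_of_nonneg_left (hRT i hi1) hK₁)
  · exact add_le_add_right (mul_le_mul_of_nonneg_left (hRT i hi1) hK₂) _
  · exact add_nonneg hKg (mul_nonneg hK₂ (hRnonneg i))
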